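/- Let c : ℱ → ℝ^𝒫 be a cost function that has a convex potential, i.e., there is a differentiable convex function Φ : ℝ^𝒫 → ℝ with c(x) = ∇Φ(x) for all x ∈ ℱ. Then a feasible flow x ∈ ℱ is a Wardrop equilibrium with respect to c if and only if x minimizes Φ over ℱ. In particular, a Wardrop equilibrium with respect to c exists, and the set of Wardrop equilibria with respect to c is convex. -/

import Mathlib

open Finset

variable {I : Type*} [Fintype I] [DecidableEq I]
  {P : I → Type*} [∀ i, Fintype (P i)] [∀ i, DecidableEq (P i)]

/-- A flow is feasible if it is nonnegative and satisfies all demands. -/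
def Feasible (d : I → ℝ) (x : ∀ i, P i → ℝ) : Prop :=
  (∀ i p, 0 ≤ x i p) ∧ ∀ i, ∑ p, x i p = d i

/-- Wardrop equilibrium with respect to a cost function. -/
def IsWardrop (d : I → ℝ) (c : (∀ i, P i → ℝ) → ∀ i, P i → ℝ)
    (x : ∀ i, P i → ℝ) : Prop :=
  Feasible d x ∧ ∀ i p, 0 < x i p → ∀ q, c x i p ≤ c x i q

/-- if the cost function `c` has a differentiable convex potential `Φ` (with
`c(x) = ∇Φ(x)` on the set of feasible flows), then a feasible flow is a Wardrop equilibrium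
w.r.t. `c` iff it minimizes `Φ` over the feasible flows; in particular a Wardrop
equilibrium exists and the set of Wardrop equilibria is convex. -/
lemma grad_ineq_aux {E : Type*} [NormedAddCommGroup E] [NormedSpace ℝ E]
    {Φ : E → ℝ} (hdiff : Differentiable ℝ Φ) (hconv : ConvexOn ℝ Set.univ Φ)
    (x y : E) : Φ x + fderiv ℝ Φ x (y - x) ≤ Φ y := by
  set g : ℝ → ℝ := fun t => Φ (x + t • (y - x)) with hg
  have hgc : ConvexOn ℝ Set.univ g := by
    have h := hconv.comp_affineMap (AffineMap.lineMap x y)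
    rw [Set.preimage_univ] at h
    suffices hgeq : g = Φ ∘ AffineMap.lineMap x y by rw [hgeq]; exact h
    funext t
    show Φ (x + t • (y - x)) = Φ (AffineMap.lineMap x y t)
    rw [AffineMap.lineMap_apply_module]
    congr 1
    module
  have hline : HasDerivAt (fun t : ℝ => x + t • (y - x)) (y - x) 0 := by
    simpa using ((hasDerivAt_id (0 : ℝ)).smul_const (y - x)).const_add x
  have hgd : HasDerivAt g (fderiv ℝ Φ x (y - x)) 0 := by
    have hf : HasFDerivAt Φ (fderiv ℝ Φ x) (x + (0 : ℝ) • (y - x)) := by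
      simpa using (hdiff x).hasFDerivAt
    exact hf.comp_hasDerivAt 0 hline
  have hs := hgc.le_slope_of_hasDerivAt (Set.mem_univ 0) (Set.mem_univ 1) one_pos hgd
  rw [slope_def_field] at hs
  have h1 : g 1 = Φ y := by
    show Φ (x + (1 : ℝ) • (y - x)) = Φ y
    congr 1; module
  have h0 : g 0 = Φ x := by
    show Φ (x + (0 : ℝ) • (y - x)) = Φ x
    congr 1; module
  rw [h1, h0] at hs
  rw [map_sub]
  norm_num at hs
  linarith

theorem wardrop_iff_minimizes_potential
    [∀ i, Nonempty (P i)]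
    (d : I → ℝ) (hd : ∀ i, 0 < d i)
    (c : (∀ i, P i → ℝ) → ∀ i, P i → ℝ)
    (Φ : (∀ i, P i → ℝ) → ℝ)
    (hΦdiff : Differentiable ℝ Φ)
    (hΦconv : ConvexOn ℝ Set.univ Φ)
    (hΦgrad : ∀ x, Feasible d x →
      ∀ i p, fderiv ℝ Φ x (Pi.single i (Pi.single p (1 : ℝ))) = c x i p) :
    (∀ x, Feasible d x →
      (IsWardrop d c x ↔ ∀ y, Feasible d y → Φ x ≤ Φ y)) ∧
    (∃ x, IsWardrop d c x) ∧
    Convex ℝ {x | IsWardrop d c x} := by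
  classical
  set F : Set (∀ i, P i → ℝ) := {x | Feasible d x} with hF
  -- convexity of the feasible set
  have hFconv : Convex ℝ F := by
    intro a ha b hb s t hs ht hst
    refine ⟨fun i p => ?_, fun i => ?_⟩
    · have h1 := ha.1 i p
      have h2 := hb.1 i p
      show 0 ≤ s * a i p + t * b i p
      nlinarith
    · show ∑ p, (s * a i p + t * b i p) = d i
      rw [Finset.sum_add_distrib, ← Finset.mul_sum, ← Finset.mul_sum, ha.2 i, hb.2 i,
        ← add_mul, hst, one_mul]
  -- the feasible set is nonempty
  have hFne : F.Nonempty := by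
    refine ⟨fun i _ => d i / (Fintype.card (P i) : ℝ), fun i p => ?_, fun i => ?_⟩
    · exact div_nonneg (hd i).le (Nat.cast_nonneg _)
    · rw [Finset.sum_const, Finset.card_univ, nsmul_eq_mul]
      rw [mul_div_cancel₀]
      exact Nat.cast_ne_zero.mpr Fintype.card_ne_zero
  -- the feasible set is closed
  have hFclosed : IsClosed F := by
    have hFeq : F = (⋂ i, ⋂ p, {x : ∀ i, P i → ℝ | 0 ≤ x i p}) ∩
        ⋂ i, {x : ∀ i, P i → ℝ | ∑ p, x i p = d i} := by
      ext x
      simp only [hF, Set.mem_setOf_eq, Set.mem_inter_iff, Set.mem_iInter, Feasible]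
    rw [hFeq]
    refine IsClosed.inter (isClosed_iInter fun i => isClosed_iInter fun p => ?_)
      (isClosed_iInter fun i => ?_)
    · exact isClosed_le continuous_const ((continuous_apply p).comp (continuous_apply i))
    · exact isClosed_eq
        (continuous_finset_sum _ fun p _ => (continuous_apply p).comp (continuous_apply i))
        continuous_const
  -- the feasible set is compact
  have hFcpt : IsCompact F := by
    have hsub : F ⊆ Set.Icc 0 (fun i _ => d i) := by
      intro x hx
      constructor
      · intro i p
        exact hx.1 i p
      · intro i p
        calc x i p ≤ ∑ q, x i q :=
              Finset.single_le_sum (fun q _ => hx.1 i q) (Finset.mem_univ p)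
          _ = d i := hx.2 i
    exact isCompact_Icc.of_isClosed_subset hFclosed hsub
  -- representation of the gradient in terms of costs
  have grad_repr : ∀ x, Feasible d x → ∀ w : ∀ i, P i → ℝ,
      fderiv ℝ Φ x w = ∑ i, ∑ p, w i p * c x i p := by
    intro x hx w
    have hw : w = ∑ i, ∑ p, w i p • (Pi.single i (Pi.single p (1 : ℝ)) : ∀ j, P j → ℝ) := by
      funext i' p'
      simp only [Finset.sum_apply, Pi.smul_apply, smul_eq_mul]
      rw [Finset.sum_eq_single i']
      · rw [Finset.sum_eq_single p']
        · rw [Pi.single_eq_same, Pi.single_eq_same, mul_one]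
        · intro q _ hq
          rw [Pi.single_eq_same, Pi.single_eq_of_ne (Ne.symm hq), mul_zero]
        · intro h; exact absurd (Finset.mem_univ p') h
      · intro j _ hj
        refine Finset.sum_eq_zero fun q _ => ?_
        rw [Pi.single_eq_of_ne (Ne.symm hj), Pi.zero_apply, mul_zero]
      · intro h; exact absurd (Finset.mem_univ i') h
    calc fderiv ℝ Φ x w
        = fderiv ℝ Φ x (∑ i, ∑ p, w i p • (Pi.single i (Pi.single p (1 : ℝ)) : ∀ j, P j → ℝ)) := by rw [← hw]
      _ = ∑ i, ∑ p, w i p * c x i p := by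
          rw [map_sum]
          refine Finset.sum_congr rfl fun i _ => ?_
          rw [map_sum]
          refine Finset.sum_congr rfl fun p _ => ?_
          rw [map_smul, smul_eq_mul, hΦgrad x hx i p]
  -- at a Wardrop equilibrium the directional derivative towards any feasible flow is ≥ 0
  have wardrop_grad_nonneg : ∀ x, IsWardrop d c x → ∀ y, Feasible d y →
      0 ≤ fderiv ℝ Φ x (y - x) := by
    intro x hx y hy
    rw [grad_repr x hx.1 (y - x)]
    refine Finset.sum_nonneg fun i _ => ?_
    obtain ⟨p₀, hp₀⟩ : ∃ p, 0 < x i p := by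
      by_contra h
      push_neg at h
      have hz : ∑ p, x i p = 0 :=
        Finset.sum_eq_zero fun p _ => le_antisymm (h p) (hx.1.1 i p)
      rw [hx.1.2 i] at hz
      exact absurd hz (hd i).ne'
    set m := c x i p₀ with hm
    have hle : ∀ p, m ≤ c x i p := fun p => hx.2 i p₀ hp₀ p
    have heq : ∀ p, 0 < x i p → c x i p = m := fun p hp =>
      le_antisymm (hx.2 i p hp p₀) (hle p)
    have h1 : ∑ p, x i p * c x i p = d i * m := by
      rw [← hx.1.2 i, Finset.sum_mul]
      refine Finset.sum_congr rfl fun p _ => ?_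
      rcases eq_or_lt_of_le (hx.1.1 i p) with h | h
      · rw [← h, zero_mul, zero_mul]
      · rw [heq p h]
    have h2 : d i * m ≤ ∑ p, y i p * c x i p := by
      rw [← hy.2 i, Finset.sum_mul]
      exact Finset.sum_le_sum fun p _ => mul_le_mul_of_nonneg_left (hle p) (hy.1 i p)
    have h3 : ∑ p, (y - x) i p * c x i p
        = ∑ p, y i p * c x i p - ∑ p, x i p * c x i p := by
      rw [← Finset.sum_sub_distrib]
      refine Finset.sum_congr rfl fun p _ => ?_
      show (y i p - x i p) * c x i p = _
      ring
    rw [h3, h1]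
    linarith
  -- a minimizer is a Wardrop equilibrium
  have min_to_wardrop : ∀ x, Feasible d x → (∀ y, Feasible d y → Φ x ≤ Φ y) →
      IsWardrop d c x := by
    intro x hx hmin
    refine ⟨hx, fun i p hp q => ?_⟩
    by_cases hpq : q = p
    · subst hpq; exact le_refl _
    set v : ∀ i, P i → ℝ :=
      (Pi.single i (Pi.single q (1 : ℝ)) : ∀ j, P j → ℝ) -
        (Pi.single i (Pi.single p (1 : ℝ)) : ∀ j, P j → ℝ) with hv
    have hvi : ∀ p' : P i, v i p' = (if p' = q then (1 : ℝ) else 0) -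
        (if p' = p then (1 : ℝ) else 0) := by
      intro p'
      show (Pi.single i (Pi.single q (1 : ℝ)) : ∀ j, P j → ℝ) i p' -
          (Pi.single i (Pi.single p (1 : ℝ)) : ∀ j, P j → ℝ) i p' = _
      rw [Pi.single_eq_same, Pi.single_eq_same, Pi.single_apply, Pi.single_apply]
    have hvne : ∀ i', i' ≠ i → v i' = 0 := by
      intro i' hii
      show (Pi.single i (Pi.single q (1 : ℝ)) : ∀ j, P j → ℝ) i' -
          (Pi.single i (Pi.single p (1 : ℝ)) : ∀ j, P j → ℝ) i' = 0
      rw [Pi.single_eq_of_ne hii, Pi.single_eq_of_ne hii, sub_zero]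
    have hseg : segment ℝ x (x + x i p • v) ⊆ F := by
      rintro z ⟨s, t, hs, ht, hst, rfl⟩
      have hz : s • x + t • (x + x i p • v) = x + (t * x i p) • v := by
        rw [smul_add, ← add_assoc, ← add_smul, hst, one_smul, smul_smul]
      rw [hz]
      set u := t * x i p with hu
      have hu0 : 0 ≤ u := mul_nonneg ht (hx.1 i p)
      have hu1 : u ≤ x i p := by
        have ht1 : t ≤ 1 := by linarith
        calc u ≤ 1 * x i p := mul_le_mul_of_nonneg_right ht1 (hx.1 i p)
          _ = x i p := one_mul _
      refine ⟨fun i' p' => ?_, fun i' => ?_⟩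
      · show 0 ≤ x i' p' + u * v i' p'
        by_cases hii : i' = i
        · subst hii
          rw [hvi p']
          by_cases h1 : p' = p
          · subst h1
            rw [if_neg (fun h => hpq h.symm), if_pos rfl]
            have : x i' p' + u * (0 - 1) = x i' p' - u := by ring
            rw [this]
            linarith
          · by_cases h2 : p' = q
            · rw [if_pos h2, if_neg h1]
              have hxn := hx.1 i' p'
              nlinarith
            · rw [if_neg h2, if_neg h1]
              have hxn := hx.1 i' p'
              rw [sub_zero, mul_zero, add_zero]
              exact hxn
        · rw [hvne i' hii]
          simp only [Pi.zero_apply, mul_zero, add_zero]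
          exact hx.1 i' p'
      · show ∑ p', (x i' p' + u * v i' p') = d i'
        rw [Finset.sum_add_distrib, ← Finset.mul_sum]
        have hvsum : ∑ p', v i' p' = 0 := by
          by_cases hii : i' = i
          · subst hii
            rw [Finset.sum_congr rfl fun p' _ => hvi p', Finset.sum_sub_distrib]
            simp
          · rw [hvne i' hii]
            simp
        rw [hvsum, mul_zero, add_zero, hx.2 i']
    have hmem : (x i p) • v ∈ posTangentConeAt F x :=
      mem_posTangentConeAt_of_segment_subset hseg
    have hloc : IsLocalMinOn Φ F x :=
      (isMinOn_iff.mpr fun y hy => hmin y hy).localize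
    have hderiv : 0 ≤ fderiv ℝ Φ x ((x i p) • v) :=
      hloc.hasFDerivWithinAt_nonneg (hΦdiff x).hasFDerivAt.hasFDerivWithinAt hmem
    rw [map_smul, smul_eq_mul] at hderiv
    have hder2 : 0 ≤ fderiv ℝ Φ x v := by
      by_contra h
      push_neg at h
      nlinarith
    have hveq : fderiv ℝ Φ x v = c x i q - c x i p := by
      rw [hv, map_sub, hΦgrad x hx i q, hΦgrad x hx i p]
    rw [hveq] at hder2
    linarith
  -- the equivalence
  have hiff : ∀ x, Feasible d x →
      (IsWardrop d c x ↔ ∀ y, Feasible d y → Φ x ≤ Φ y) := by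
    intro x hx
    constructor
    · intro hw y hy
      have hgi := grad_ineq_aux hΦdiff hΦconv x y
      have h0 := wardrop_grad_nonneg x hw y hy
      linarith
    · exact min_to_wardrop x hx
  refine ⟨hiff, ?_, ?_⟩
  · obtain ⟨x₀, hx₀F, hx₀min⟩ := hFcpt.exists_isMinOn hFne hΦdiff.continuous.continuousOn
    exact ⟨x₀, (hiff x₀ hx₀F).mpr fun y hy => isMinOn_iff.mp hx₀min y hy⟩
  · intro a ha b hb s t hs ht hst
    have haw : IsWardrop d c a := ha
    have hbw : IsWardrop d c b := hb
    have hzF : Feasible d (s • a + t • b) := hFconv haw.1 hbw.1 hs ht hst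
    refine (hiff _ hzF).mpr fun y hy => ?_
    have hca := (hiff a haw.1).mp haw y hy
    have hcb := (hiff b hbw.1).mp hbw y hy
    have hΦz : Φ (s • a + t • b) ≤ s * Φ a + t * Φ b := by
      have := hΦconv.2 (Set.mem_univ a) (Set.mem_univ b) hs ht hst
      simpa using this
    calc Φ (s • a + t • b) ≤ s * Φ a + t * Φ b := hΦz
      _ ≤ s * Φ y + t * Φ y := by
          have := mul_le_mul_of_nonneg_left hca hs
          have := mul_le_mul_of_nonneg_left hcb ht
          linarith
      _ = Φ y := by rw [← add_mul, hst, one_mul]
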